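/- Let s ≥ 0 and c ≥ 1 satisfy exp(s)/(1+s) = c. Then exp(s/2) ≤ c + √(c² − c), and consequently s ≤ 2·ln(c + √(c² − c)) ≤ 2·ln(2c). -/
import Mathlib

/-- if `s ≥ 0`, `c ≥ 1` and `exp(s)/(1+s) = c`, then
`exp(s/2) ≤ c + √(c² − c)`, and consequently
`s ≤ 2 ln(c + √(c² − c)) ≤ 2 ln(2c)`. -/
theorem gInv_quadratic_bound (s c : ℝ) (hs : 0 ≤ s) (hc : 1 ≤ c)
    (h : Real.exp s / (1 + s) = c) :
    Real.exp (s / 2) ≤ c + Real.sqrt (c ^ 2 - c) ∧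
    s ≤ 2 * Real.log (c + Real.sqrt (c ^ 2 - c)) ∧
    2 * Real.log (c + Real.sqrt (c ^ 2 - c)) ≤ 2 * Real.log (2 * c) := by
  have h1s : (0:ℝ) < 1 + s := by linarith
  have hes : Real.exp s = c * (1 + s) := by
    field_simp at h; linarith [h]
  set t := Real.exp (s / 2) with ht
  have ht2 : t ^ 2 = Real.exp s := by
    rw [ht, ← Real.exp_nat_mul]; ring_nf
  have hlin : 1 + s / 2 ≤ t := by
    have := Real.add_one_le_exp (s / 2); rw [ht]; linarith
  have hlin' : 2 + s ≤ 2 * t := by linarith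
  have hquad : t ^ 2 - 2 * c * t + c ≤ 0 := by
    have : t ^ 2 = c * (1 + s) := by rw [ht2, hes]
    nlinarith [hlin', this, hc]
  have hcc : (0:ℝ) ≤ c ^ 2 - c := by nlinarith
  have hsq : Real.sqrt (c ^ 2 - c) ^ 2 = c ^ 2 - c := Real.sq_sqrt hcc
  have key : t ≤ c + Real.sqrt (c ^ 2 - c) := by
    nlinarith [Real.sqrt_nonneg (c ^ 2 - c), hsq, hquad, sq_nonneg (t - c - Real.sqrt (c ^ 2 - c))]
  have htpos : 0 < t := Real.exp_pos _
  have hpos : 0 < c + Real.sqrt (c ^ 2 - c) := lt_of_lt_of_le htpos key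
  refine ⟨key, ?_, ?_⟩
  · have := Real.log_le_log htpos key
    rw [ht, Real.log_exp] at this
    linarith
  · have hle : c + Real.sqrt (c ^ 2 - c) ≤ 2 * c := by
      nlinarith [Real.sqrt_nonneg (c ^ 2 - c), hsq]
    have := Real.log_le_log hpos hle
    linarith
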